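/- Let n : ℕ → ℕ be a strictly increasing sequence of positive integers and for each i let f i : (Fin (n (i+1)) → ℤ) → (Fin (n i) → ℤ) be a surjective homomorphism of additive groups (such a homomorphism between finitely generated free abelian groups automatically admits a section, i.e. the projective system is split). Then the projective limit, namely the subgroup L = { x ∈ ∏ i, (Fin (n i) → ℤ) | ∀ i, f i (x (i+1)) = x i } of the product with componentwise addition, is isomorphic as an additive group to ℕ → ℤ. -/

import Mathlib

set_option synthInstance.maxHeartbeats 1000000
set_option maxHeartbeats 1000000

/-- Recursively build a compatible sequence from an initial value and kernel corrections. -/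
def projlimBuild (n : ℕ → ℕ)
    (s : ∀ i, (Fin (n i) → ℤ) → (Fin (n (i + 1)) → ℤ))
    (a : Fin (n 0) → ℤ) (k : ∀ i, Fin (n (i + 1)) → ℤ) : ∀ i, Fin (n i) → ℤ
  | 0 => a
  | (i + 1) => s i (projlimBuild n s a k i) + k i

/-- The projective limit of a projective system `ℤ^{n 1} ← ℤ^{n 2} ← ⋯` of surjective
homomorphisms between free abelian groups of strictly increasing positive ranks is
isomorphic to the Baer–Specker group `ℤ^ω = ℕ → ℤ`. -/
theorem projlim_split_system_iso_zomega
    (n : ℕ → ℕ) (hmono : StrictMono n) (hpos : ∀ i, 0 < n i)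
    (f : ∀ i, ((Fin (n (i + 1)) → ℤ) →+ (Fin (n i) → ℤ)))
    (hsurj : ∀ i, Function.Surjective (f i))
    (L : AddSubgroup (∀ i, Fin (n i) → ℤ))
    (hL : (L : Set (∀ i, Fin (n i) → ℤ)) = {x | ∀ i, f i (x (i + 1)) = x i}) :
    Nonempty (L ≃+ (ℕ → ℤ)) := by
  -- membership criterion
  have hmem : ∀ x, x ∈ L ↔ ∀ i, f i (x (i + 1)) = x i := by
    intro x
    rw [← SetLike.mem_coe, hL]
    rfl
  -- choose sections
  choose s hs using fun i =>
    Module.projective_lifting_property (f i).toIntLinearMap LinearMap.id (hsurj i)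
  have hsec : ∀ i v, f i (s i v) = v := by
    intro i v
    have := congrArg (fun g => g v) (hs i)
    simpa using this
  -- kernels
  set K : ∀ i, Submodule ℤ (Fin (n (i + 1)) → ℤ) :=
    fun i => LinearMap.ker (f i).toIntLinearMap with hK
  -- Step 1 : L ≃+ (Fin (n 0) → ℤ) × ∀ i, K i
  let bld : (Fin (n 0) → ℤ) → (∀ i, K i) → ∀ i, Fin (n i) → ℤ :=
    fun a k => projlimBuild n (fun i v => s i v) a (fun i => (k i : Fin (n (i+1)) → ℤ))
  have bld_mem : ∀ a k, bld a k ∈ L := by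
    intro a k
    rw [hmem]
    intro i
    show f i (s i (bld a k i) + (k i : Fin (n (i+1)) → ℤ)) = bld a k i
    rw [map_add, hsec]
    have : f i ((k i : Fin (n (i+1)) → ℤ)) = 0 := (k i).2
    rw [this, add_zero]
  have key : ∀ (a : Fin (n 0) → ℤ) (k : ∀ i, K i) (x : ∀ i, Fin (n i) → ℤ),
      a = x 0 → (∀ j, (k j : Fin (n (j+1)) → ℤ) = x (j + 1) - s j (x j)) →
      ∀ i, bld a k i = x i := by
    intro a k x ha hk i
    induction i with
    | zero => exact ha
    | succ i ih =>
      show s i (bld a k i) + (k i : Fin (n (i+1)) → ℤ) = x (i + 1)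
      rw [ih, hk]; abel
  let e1 : L ≃+ (Fin (n 0) → ℤ) × (∀ i, K i) :=
    { toFun := fun x =>
        ⟨x.1 0, fun i => ⟨x.1 (i + 1) - s i (x.1 i), by
          have hx := (hmem x.1).mp x.2 i
          simp only [hK, LinearMap.mem_ker]
          show f i (x.1 (i + 1) - s i (x.1 i)) = 0
          rw [map_sub, hx, hsec, sub_self]⟩⟩
      invFun := fun p => ⟨bld p.1 p.2, bld_mem p.1 p.2⟩
      left_inv := by
        rintro ⟨x, hx⟩
        apply Subtype.ext
        funext i
        exact key _ _ x rfl (fun j => rfl) i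
      right_inv := by
        rintro ⟨a, k⟩
        refine Prod.ext rfl ?_
        funext i
        apply Subtype.ext
        show s i (bld a k i) + (k i : Fin (n (i+1)) → ℤ) - s i (bld a k i) = _
        abel
      map_add' := by
        rintro ⟨x, hx⟩ ⟨y, hy⟩
        refine Prod.ext rfl ?_
        funext i
        apply Subtype.ext
        show (x + y) (i + 1) - s i ((x + y) i) = _
        simp [map_add]
        abel }
  -- Step 2 : each kernel is free & finite, pick bases
  let ι : ℕ → Type := fun i => Module.Free.ChooseBasisIndex ℤ (K i)
  let b : ∀ i, Module.Basis (ι i) ℤ (K i) := fun i => Module.Free.chooseBasis ℤ (K i)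
  -- each ι i nonempty (else f i would be bijective, contradicting strict rank growth)
  have hne : ∀ i, Nonempty (ι i) := by
    intro i
    by_contra h
    have hempty : IsEmpty (ι i) := not_nonempty_iff.mp h
    have hsub : Subsingleton (K i) := by
      have := (b i).repr.toEquiv.subsingleton_congr.mpr (by infer_instance)
      exact this
    have hker : K i = ⊥ := by
      ext v
      simp only [Submodule.mem_bot]
      constructor
      · intro hv
        have : (⟨v, hv⟩ : K i) = ⟨0, (K i).zero_mem⟩ := Subsingleton.elim _ _
        exact congrArg Subtype.val this
      · rintro rfl; exact (K i).zero_mem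
    have hinj : Function.Injective (f i) := by
      have := LinearMap.ker_eq_bot.mp hker
      exact this
    have hbij : Function.Bijective ((f i).toIntLinearMap) := ⟨hinj, hsurj i⟩
    have he : (Fin (n (i + 1)) → ℤ) ≃ₗ[ℤ] (Fin (n i) → ℤ) :=
      LinearEquiv.ofBijective _ hbij
    have hrank : n (i + 1) = n i := by
      have := he.finrank_eq
      rwa [Module.finrank_fin_fun, Module.finrank_fin_fun] at this
    exact absurd hrank (Nat.ne_of_gt (hmono (Nat.lt_succ_self i)))
  -- Step 3 : (∀ i, K i) ≃+ (∀ i, ι i → ℤ)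
  let e2 : (∀ i, K i) ≃+ (∀ i, ι i → ℤ) :=
    (LinearEquiv.piCongrRight fun i => (b i).equivFun).toAddEquiv
  -- Step 4 : uncurry sigma
  let e3 : (∀ i, ι i → ℤ) ≃+ ((Σ i, ι i) → ℤ) :=
    { toFun := fun g p => g p.1 p.2
      invFun := fun g i j => g ⟨i, j⟩
      left_inv := fun g => rfl
      right_inv := fun g => by funext p; cases p; rfl
      map_add' := fun g h => rfl }
  -- Step 5 : merge the product
  let e4 : (Fin (n 0) → ℤ) × ((Σ i, ι i) → ℤ) ≃+ ((Fin (n 0) ⊕ Σ i, ι i) → ℤ) :=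
    { toFun := fun p => Sum.elim p.1 p.2
      invFun := fun g => ⟨g ∘ Sum.inl, g ∘ Sum.inr⟩
      left_inv := fun p => rfl
      right_inv := fun g => by funext x; cases x <;> rfl
      map_add' := fun p q => by funext x; cases x <;> rfl }
  -- Step 6 : the index type is countably infinite
  have : Infinite (Σ i, ι i) :=
    Infinite.of_injective (fun m : ℕ => (⟨m, (hne m).some⟩ : Σ i, ι i))
      (fun a c h => congrArg Sigma.fst h)
  obtain ⟨d⟩ := nonempty_denumerable ((Fin (n 0) ⊕ Σ i, ι i))
  let eJ : (Fin (n 0) ⊕ Σ i, ι i) ≃ ℕ := Denumerable.eqv _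
  let e5 : ((Fin (n 0) ⊕ Σ i, ι i) → ℤ) ≃+ (ℕ → ℤ) :=
    { toFun := fun g => g ∘ eJ.symm
      invFun := fun g => g ∘ eJ
      left_inv := fun g => by funext x; simp
      right_inv := fun g => by funext x; simp
      map_add' := fun g h => rfl }
  exact ⟨e1.trans (((AddEquiv.refl _).prodCongr e2).trans
    (((AddEquiv.refl _).prodCongr e3).trans (e4.trans e5)))⟩
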